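/- Let (a_i), (b_i) be 5-periodic real sequences such that every solution of the third-order equation V_i = a_i V_{i-1} - b_i V_{i-2} + V_{i-3} is 5-periodic (V_{i+5} = V_i). Then every solution of the second-order equation W_i = a_i W_{i-1} - W_{i-2} is 5-antiperiodic: W_{i+5} = -W_i. -/

import Mathlib

/-- One forward step of the third-order recurrence on triples
`(V i, V (i+1), V (i+2))`. -/
def stmt16F (a b : ℤ → ℝ) (i : ℤ) (t : ℝ × ℝ × ℝ) : ℝ × ℝ × ℝ :=
  (t.2.1, t.2.2, a (i+3) * t.2.2 - b (i+3) * t.2.1 + t.1)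

/-- One backward step. -/
def stmt16G (a b : ℤ → ℝ) (i : ℤ) (t : ℝ × ℝ × ℝ) : ℝ × ℝ × ℝ :=
  (t.2.2 - a (i+3) * t.2.1 + b (i+3) * t.1, t.1, t.2.1)

lemma stmt16FG (a b : ℤ → ℝ) (i : ℤ) (t : ℝ × ℝ × ℝ) :
    stmt16F a b i (stmt16G a b i t) = t := by
  obtain ⟨p, q, r⟩ := t
  simp only [stmt16F, stmt16G, Prod.mk.injEq]
  exact ⟨trivial, trivial, by ring⟩

def stmt16Tpos (a b : ℤ → ℝ) (x y z : ℝ) : ℕ → ℝ × ℝ × ℝ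
  | 0 => (x, y, z)
  | n+1 => stmt16F a b n (stmt16Tpos a b x y z n)

def stmt16Tneg (a b : ℤ → ℝ) (x y z : ℝ) : ℕ → ℝ × ℝ × ℝ
  | 0 => stmt16G a b (-1) (x, y, z)
  | n+1 => stmt16G a b (Int.negSucc (n+1)) (stmt16Tneg a b x y z n)

def stmt16T (a b : ℤ → ℝ) (x y z : ℝ) : ℤ → ℝ × ℝ × ℝ
  | Int.ofNat n => stmt16Tpos a b x y z n
  | Int.negSucc n => stmt16Tneg a b x y z n

def stmt16V (a b : ℤ → ℝ) (x y z : ℝ) (i : ℤ) : ℝ := (stmt16T a b x y z i).1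

lemma stmt16Tstep (a b : ℤ → ℝ) (x y z : ℝ) (i : ℤ) :
    stmt16T a b x y z (i+1) = stmt16F a b i (stmt16T a b x y z i) := by
  cases i with
  | ofNat n => rfl
  | negSucc n =>
      cases n with
      | zero =>
          show stmt16T a b x y z 0 = stmt16F a b (Int.negSucc 0) (stmt16Tneg a b x y z 0)
          show (x, y, z) = stmt16F a b (Int.negSucc 0) (stmt16G a b (-1) (x, y, z))
          rw [show (Int.negSucc 0) = (-1 : ℤ) from rfl, stmt16FG]
      | succ m =>
          show stmt16T a b x y z (Int.negSucc m)
              = stmt16F a b (Int.negSucc (m+1)) (stmt16Tneg a b x y z (m+1))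
          show stmt16Tneg a b x y z m
              = stmt16F a b (Int.negSucc (m+1))
                  (stmt16G a b (Int.negSucc (m+1)) (stmt16Tneg a b x y z m))
          rw [stmt16FG]

lemma stmt16Vrec (a b : ℤ → ℝ) (x y z : ℝ) (i : ℤ) :
    stmt16V a b x y z i = a i * stmt16V a b x y z (i-1)
      - b i * stmt16V a b x y z (i-2) + stmt16V a b x y z (i-3) := by
  have E1 : ∀ j : ℤ, stmt16V a b x y z (j+1) = (stmt16T a b x y z j).2.1 := by
    intro j
    show (stmt16T a b x y z (j+1)).1 = _
    rw [stmt16Tstep]; rfl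
  have E2 : ∀ j : ℤ, (stmt16T a b x y z (j+1)).2.1 = (stmt16T a b x y z j).2.2 := by
    intro j; rw [stmt16Tstep]; rfl
  have E3 : ∀ j : ℤ, (stmt16T a b x y z (j+1)).2.2
      = a (j+3) * (stmt16T a b x y z j).2.2 - b (j+3) * (stmt16T a b x y z j).2.1
        + (stmt16T a b x y z j).1 := by
    intro j; rw [stmt16Tstep]; rfl
  have key : ∀ j : ℤ, stmt16V a b x y z (j+3)
      = a (j+3) * stmt16V a b x y z (j+2) - b (j+3) * stmt16V a b x y z (j+1)
        + stmt16V a b x y z j := by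
    intro j
    have g0 : stmt16V a b x y z j = (stmt16T a b x y z j).1 := rfl
    have g1 : stmt16V a b x y z (j+1) = (stmt16T a b x y z j).2.1 := E1 j
    have g2 : stmt16V a b x y z (j+2) = (stmt16T a b x y z j).2.2 := by
      have h1 : stmt16V a b x y z (j+2) = stmt16V a b x y z (j+1+1) :=
        congrArg _ (by ring)
      rw [h1, E1 (j+1), E2 j]
    have g3 : stmt16V a b x y z (j+3)
        = a (j+3) * (stmt16T a b x y z j).2.2 - b (j+3) * (stmt16T a b x y z j).2.1
          + (stmt16T a b x y z j).1 := by
      have h1 : stmt16V a b x y z (j+3) = stmt16V a b x y z (j+1+1+1) :=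
        congrArg _ (by ring)
      have h2 : (stmt16T a b x y z (j+1+1)).2.1 = (stmt16T a b x y z (j+1)).2.2 :=
        E2 (j+1)
      rw [h1, E1 (j+1+1), h2, E3 j]
    linear_combination g3 - a (j+3) * g2 + b (j+3) * g1 - g0
  have h := key (i-3)
  rw [show i-3+3 = i from by ring, show i-3+2 = i-1 from by ring,
     show i-3+1 = i-2 from by ring] at h
  exact h

lemma stmt16Vshift (a b : ℤ → ℝ) (s : ℤ) (x y z : ℝ) (i : ℤ) :
    stmt16V (fun j => a (j+s)) (fun j => b (j+s)) x y z (i - s)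
      = a i * stmt16V (fun j => a (j+s)) (fun j => b (j+s)) x y z (i - 1 - s)
        - b i * stmt16V (fun j => a (j+s)) (fun j => b (j+s)) x y z (i - 2 - s)
        + stmt16V (fun j => a (j+s)) (fun j => b (j+s)) x y z (i - 3 - s) := by
  have h := stmt16Vrec (fun j => a (j+s)) (fun j => b (j+s)) x y z (i - s)
  rw [show i - s + s = i from by ring, show i - s - 1 = i - 1 - s from by ring,
      show i - s - 2 = i - 2 - s from by ring,
      show i - s - 3 = i - 3 - s from by ring] at h
  exact h

/-- If `(a_i)`, `(b_i)` are 5-periodic and every solution of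
`V i = a i V_{i-1} - b i V_{i-2} + V_{i-3}` is 5-periodic, then every solution of
`W i = a i W_{i-1} - W_{i-2}` is 5-antiperiodic. -/
theorem stmt16 (a b : ℤ → ℝ)
    (hpa : ∀ i : ℤ, a (i + 5) = a i) (hpb : ∀ i : ℤ, b (i + 5) = b i)
    (hV : ∀ V : ℤ → ℝ,
      (∀ i : ℤ, V i = a i * V (i - 1) - b i * V (i - 2) + V (i - 3)) →
      ∀ i : ℤ, V (i + 5) = V i) :
    ∀ W : ℤ → ℝ, (∀ i : ℤ, W i = a i * W (i - 1) - W (i - 2)) →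
      ∀ i : ℤ, W (i + 5) = -W i := by
  -- the master monodromy relation, at every shift `s` and initial data `x y z`
  have per : ∀ (s : ℤ) (x y z : ℝ),
      x = a (5+s) * (a (4+s) * (a (3+s) * z - b (3+s) * y + x) - b (4+s) * z + y)
          - b (5+s) * (a (3+s) * z - b (3+s) * y + x) + z := by
    intro s x y z
    have hU : ∀ i : ℤ,
        (fun k => stmt16V (fun j => a (j+s)) (fun j => b (j+s)) x y z (k - s)) i
          = a i * (fun k => stmt16V (fun j => a (j+s)) (fun j => b (j+s)) x y z (k - s)) (i-1)
            - b i * (fun k => stmt16V (fun j => a (j+s)) (fun j => b (j+s)) x y z (k - s)) (i-2)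
            + (fun k => stmt16V (fun j => a (j+s)) (fun j => b (j+s)) x y z (k - s)) (i-3) :=
      fun i => stmt16Vshift a b s x y z i
    have h : stmt16V (fun j => a (j+s)) (fun j => b (j+s)) x y z (s + 5 - s)
        = stmt16V (fun j => a (j+s)) (fun j => b (j+s)) x y z (s - s) := hV _ hU s
    rw [show s + 5 - s = 5 from by ring, show s - s = 0 from by ring] at h
    have h0 : stmt16V (fun j => a (j+s)) (fun j => b (j+s)) x y z 0 = x := rfl
    have h1 : stmt16V (fun j => a (j+s)) (fun j => b (j+s)) x y z 1 = y := rfl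
    have h2 : stmt16V (fun j => a (j+s)) (fun j => b (j+s)) x y z 2 = z := rfl
    have h3 := stmt16Vrec (fun j => a (j+s)) (fun j => b (j+s)) x y z 3
    have h4 := stmt16Vrec (fun j => a (j+s)) (fun j => b (j+s)) x y z 4
    have h5 := stmt16Vrec (fun j => a (j+s)) (fun j => b (j+s)) x y z 5
    norm_num at h3 h4 h5
    rw [h0, h1, h2] at h3
    rw [h1, h2, h3] at h4
    rw [h2, h3, h4] at h5
    rw [h0, h5] at h
    linear_combination -h
  -- index reductions
  have ha5 : a 5 = a 0 := by simpa using hpa 0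
  have ha6 : a 6 = a 1 := by simpa using hpa 1
  have ha7 : a 7 = a 2 := by simpa using hpa 2
  have ha8 : a 8 = a 3 := by simpa using hpa 3
  have hb5 : b 5 = b 0 := by simpa using hpb 0
  have hb6 : b 6 = b 1 := by simpa using hpb 1
  have hb7 : b 7 = b 2 := by simpa using hpb 2
  have hb8 : b 8 = b 3 := by simpa using hpb 3
  -- the monodromy relations at shifts 0..3 and basis vectors
  have R01 := per 0 1 0 0
  have R03 := per 0 0 0 1
  have R11 := per 1 1 0 0
  have R12 := per 1 0 1 0
  have R13 := per 1 0 0 1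
  have R21 := per 2 1 0 0
  have R22 := per 2 0 1 0
  have R23 := per 2 0 0 1
  have R31 := per 3 1 0 0
  have R32 := per 3 0 1 0
  norm_num at R01 R03 R11 R12 R13 R21 R22 R23 R31 R32
  simp only [ha5, ha6, ha7, ha8, hb5, hb6, hb7, hb8] at R01 R03 R11 R12 R13 R21 R22 R23 R31 R32
  -- derived relations
  have hB1 : b 4 = a 1 := by linear_combination R12 + b 4 * R11
  have hB2 : b 0 = a 2 := by linear_combination R22 + b 0 * R21
  have hB3 : b 1 = a 3 := by linear_combination R32 + b 1 * R31
  have hQ0 : a 0 * a 1 = 1 + a 3 := by linear_combination R03 - a 3 * R01 - a 0 * hB1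
  have hQ1 : a 1 * a 2 = 1 + a 4 := by linear_combination R13 - a 4 * R11 - a 1 * hB2
  have hQ2 : a 2 * a 3 = 1 + a 0 := by linear_combination R23 - a 0 * R21 - a 2 * hB3
  -- now the second-order equation
  intro W hW i
  have hW' : ∀ j : ℤ, W (j+2) = a (j+2) * W (j+1) - W j := by
    intro j
    have h := hW (j+2)
    rw [show j+2-1 = j+1 from by ring, show j+2-2 = j from by ring] at h
    exact h
  have hw2 := hW' 0
  have hw3 := hW' 1
  have hw4 := hW' 2
  have hw5 := hW' 3
  have hw6 := hW' 4
  norm_num at hw2 hw3 hw4 hw5 hw6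
  rw [ha5] at hw5
  rw [ha6] at hw6
  have h50 : W 5 = -W 0 := by
    linear_combination hw5 + a 0 * hw4 + (a 0 * a 4 - 1) * hw3
      + (a 3 * (a 0 * a 4 - 1) - a 0) * hw2
      + (a 0 * a 2 * W 1 - a 2 * a 3 * W 0) * hQ0
      + (a 0 * a 3 * W 0 - a 0 * a 0 * W 1) * hQ1
      + ((a 0 + a 0 * a 4 - 1) * W 1 - (1 + a 3) * W 0) * hQ2
  have h61 : W 6 = -W 1 := by
    linear_combination hw6 + a 1 * hw5 + (a 0 * a 1 - 1) * hw4
      + (a 4 * (a 0 * a 1 - 1) - a 1) * hw3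
      + (a 3 * (a 4 * (a 0 * a 1 - 1) - a 1) - (a 0 * a 1 - 1)) * hw2
      + ((1 - a 3 - a 3 * a 4) * W 0
          + (a 2 * a 3 + a 2 * a 3 * a 4 - 1 - a 4 - a 2) * W 1) * hQ0
      + (a 3 * a 3 * W 0 - a 0 * a 3 * W 1) * hQ1
      + ((a 3 + a 3 * a 4 - a 1) * W 1 - a 1 * a 3 * W 0) * hQ2
  have step_up : ∀ j : ℤ, W (j+5) = -W j → W (j+6) = -W (j+1) → W (j+7) = -W (j+2) := by
    intro j p0 p1
    have hw7 : W (j+7) = a (j+2) * W (j+6) - W (j+5) := by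
      have h := hW' (j+5)
      rw [show j+5+2 = j+7 from by ring, show j+5+1 = j+6 from by ring] at h
      have hp : a (j+7) = a (j+2) := by
        have := hpa (j+2); rw [show j+2+5 = j+7 from by ring] at this; exact this
      rw [hp] at h; exact h
    have hw2' := hW' j
    linear_combination hw7 + a (j+2) * p1 - p0 + hw2'
  have step_down : ∀ j : ℤ, W (j+5) = -W j → W (j+6) = -W (j+1) → W (j+4) = -W (j-1) := by
    intro j p0 p1
    have hw6' : W (j+6) = a (j+1) * W (j+5) - W (j+4) := by
      have h := hW' (j+4)
      rw [show j+4+2 = j+6 from by ring, show j+4+1 = j+5 from by ring] at h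
      have hp : a (j+6) = a (j+1) := by
        have := hpa (j+1); rw [show j+1+5 = j+6 from by ring] at this; exact this
      rw [hp] at h; exact h
    have hw1 : W (j+1) = a (j+1) * W j - W (j-1) := by
      have h := hW' (j-1)
      rw [show j-1+2 = j+1 from by ring, show j-1+1 = j from by ring] at h
      exact h
    linear_combination hw6' - p1 + a (j+1) * p0 + hw1
  have main : ∀ i : ℤ, W (i+5) = -W i ∧ W (i+6) = -W (i+1) := by
    intro i
    induction i using Int.induction_on with
    | zero =>
        constructor
        · rw [show (0:ℤ)+5 = 5 from by norm_num]; exact h50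
        · rw [show (0:ℤ)+6 = 6 from by norm_num, show (0:ℤ)+1 = 1 from by norm_num]
          exact h61
    | succ n ih =>
        obtain ⟨p0, p1⟩ := ih
        constructor
        · rw [show ((n:ℤ)+1)+5 = n+6 from by ring]; exact p1
        · have h := step_up n p0 p1
          rw [show ((n:ℤ)+1)+6 = n+7 from by ring, show ((n:ℤ)+1)+1 = n+2 from by ring]
          exact h
    | pred n ih =>
        obtain ⟨p0, p1⟩ := ih
        constructor
        · have h := step_down (-(n:ℤ)) p0 p1
          rw [show (-(n:ℤ)-1)+5 = -(n:ℤ)+4 from by ring]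
          exact h
        · rw [show (-(n:ℤ)-1)+6 = -(n:ℤ)+5 from by ring,
              show (-(n:ℤ)-1)+1 = -(n:ℤ) from by ring]
          exact p0
  exact (main i).1
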